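/- arXiv:1904.10067 — 2 statements merged into one kernel-verified Lean document; each statement's English description precedes it below -/
import Mathlib

section
/- Let R be a finite type of n replicas, let F ⊆ R be the set of faulty replicas, and let S, T ⊆ R be two quorums. If (|S| : ℝ) ≥ q_c · n, (|T| : ℝ) ≥ q_r · n, and (|F| : ℝ) < (q_c + q_r − 1) · n for real parameters q_c, q_r, then there exists a replica r ∈ S ∩ T with r ∉ F, i.e., the two quorums intersect in at least one honest replica (Flexible Quorum Intersection). -/
/-- Flexible Quorum Intersection: a `q_c`-quorum and a `q_r`-quorum intersect
in at least one honest replica when the faulty fraction is below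
`q_c + q_r - 1`. -/
theorem flexible_quorum_intersection
    {R : Type*} [Fintype R] [DecidableEq R]
    (n : ℕ) (hn : Fintype.card R = n)
    (F S T : Finset R) (q_c q_r : ℝ)
    (hS : (S.card : ℝ) ≥ q_c * n)
    (hT : (T.card : ℝ) ≥ q_r * n)
    (hF : (F.card : ℝ) < (q_c + q_r - 1) * n) :
    ∃ r ∈ S ∩ T, r ∉ F := by
  have hkey : Finset.card (S ∪ T) + Finset.card (S ∩ T) = S.card + T.card :=
    Finset.card_union_add_card_inter S T
  have hun : Finset.card (S ∪ T) ≤ n := hn ▸ Finset.card_le_univ _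
  have hlt : (F.card : ℝ) < ((S ∩ T).card : ℝ) := by
    have h1 : (S.card : ℝ) + T.card = (S ∪ T).card + (S ∩ T).card := by
      exact_mod_cast hkey.symm
    have h2 : ((S ∪ T).card : ℝ) ≤ n := by exact_mod_cast hun
    nlinarith
  have hltn : F.card < (S ∩ T).card := by exact_mod_cast hlt
  have : ¬ (S ∩ T ⊆ F) := fun h => absurd (Finset.card_le_card h) (by omega)
  obtain ⟨r, hr, hrF⟩ := Finset.not_subset.mp this
  exact ⟨r, hr, hrF⟩
end

section
/- Let R be a finite type of n replicas, V a type of values, and vote : R → V → Prop a voting relation in a single view. Let F ⊆ R be the faulty replicas and suppose every honest replica votes for at most one value: for all r ∉ F and all values v, w, if vote r v and vote r w then v = w. Suppose there are Finsets S, T ⊆ R with every member of S voting for value b and every member of T voting for value b', with (|S| : ℝ) ≥ q_c · n, (|T| : ℝ) ≥ q_r · n, and (|F| : ℝ) < (q_c + q_r − 1) · n. Then b = b'. (Within a view, a value receiving q_c votes excludes any conflicting value from being certified with q_r votes.) -/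
/-- Within a view, a value receiving `q_c · n` votes excludes any conflicting
value from being certified with `q_r · n` votes, when the faulty fraction is
below `q_c + q_r - 1` and honest replicas vote for at most one value. -/
theorem unique_certified_value
    {R : Type*} [Fintype R] [DecidableEq R] {V : Type*}
    (n : ℕ) (hn : Fintype.card R = n)
    (vote : R → V → Prop)
    (F : Finset R)
    (honest_votes_once : ∀ r : R, r ∉ F → ∀ v w : V, vote r v → vote r w → v = w)
    (b b' : V) (S T : Finset R)
    (hSvote : ∀ r ∈ S, vote r b)
    (hTvote : ∀ r ∈ T, vote r b')
    (q_c q_r : ℝ)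
    (hS : (S.card : ℝ) ≥ q_c * n)
    (hT : (T.card : ℝ) ≥ q_r * n)
    (hF : (F.card : ℝ) < (q_c + q_r - 1) * n) :
    b = b' := by
  have hunion : ((S ∪ T).card : ℝ) ≤ n := by
    exact_mod_cast (by
      calc (S ∪ T).card ≤ Fintype.card R := Finset.card_le_univ _
        _ = n := hn)
  have hcard : (S.card : ℝ) + T.card = ((S ∪ T).card : ℝ) + (S ∩ T).card := by
    exact_mod_cast congrArg (Nat.cast (R := ℝ)) (Finset.card_union_add_card_inter S T).symm
  have hinter : ((F.card : ℝ)) < ((S ∩ T).card : ℝ) := by nlinarith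
  have hlt : F.card < (S ∩ T).card := by exact_mod_cast hinter
  have hnotsub : ¬ (S ∩ T ⊆ F) := fun h => absurd (Finset.card_le_card h) (not_le.mpr hlt)
  obtain ⟨r, hrm, hrF⟩ := Finset.not_subset.mp hnotsub
  have hr : r ∈ S ∩ T ∧ r ∉ F := ⟨hrm, hrF⟩
  have hrS : r ∈ S := (Finset.mem_inter.mp hr.1).1
  have hrT : r ∈ T := (Finset.mem_inter.mp hr.1).2
  exact honest_votes_once r hr.2 b b' (hSvote r hrS) (hTvote r hrT)
end
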